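/- Let n ≥ 4 and let 𝔽 be a family of subsets of [n] = {1, …, n} such that every F ∈ 𝔽 satisfies 3 ≤ |F| ≤ n − 2, and such that |F ∩ F'| ≤ 1 for all distinct F, F' ∈ 𝔽. Then there exists a matroid M of rank 3 on [n] whose set of cyclic flats is exactly {∅, [n]} ∪ 𝔽, in which every F ∈ 𝔽 is a flat of rank 2. -/

import Mathlib

namespace PaperPOAM

variable {α : Type*}

/-- A circuit of a matroid: a minimal dependent set. -/
def IsCircuit (M : Matroid α) (C : Set α) : Prop :=
  M.Dep C ∧ ∀ D, D ⊂ C → ¬ M.Dep D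

/-- A loop of a matroid: an element whose singleton is dependent. -/
def IsLoop (M : Matroid α) (e : α) : Prop := M.Dep {e}

/-- The set of loops of a matroid. -/
def loops (M : Matroid α) : Set α := {e | IsLoop M e}

/-- A coloop: an element of the ground set contained in every base. -/
def IsColoop (M : Matroid α) (e : α) : Prop := e ∈ M.E ∧ ∀ B, M.IsBase B → e ∈ B

/-- A cyclic flat: a flat that is a union of circuits, i.e. a flat each of whose
elements lies in a circuit contained in the flat. -/
def IsCyclicFlat (M : Matroid α) (F : Set α) : Prop :=
  M.IsFlat F ∧ ∀ e ∈ F, ∃ C, IsCircuit M C ∧ C ⊆ F ∧ e ∈ C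

/-- The rank of a set in a matroid: the largest size of an independent subset. -/
noncomputable def rkOf (M : Matroid α) (X : Set α) : ℕ :=
  sSup {n | ∃ I, M.Indep I ∧ I ⊆ X ∧ I.ncard = n}

/-- The matroid has rank `r`: every base has `r` elements. -/
def RankEq (M : Matroid α) (r : ℕ) : Prop := ∀ B, M.IsBase B → B.ncard = r

/-- Two matroids are isomorphic: there is a bijection between the ground sets carrying
the bases of one exactly onto the bases of the other. -/
def MatroidIso (M N : Matroid α) : Prop :=
  ∃ f : α → α, Set.BijOn f M.E N.E ∧ ∀ B, B ⊆ M.E → (M.IsBase B ↔ N.IsBase (f '' B))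

/-- `M` is the rank-2 Schubert matroid `S(a,b)` on `{1,…,n}`: its bases are exactly the
two-element subsets `{i,j}` of `{1,…,n}` with `i < j`, `a ≤ i`, `b ≤ j`. -/
def IsSchubert2 (n a b : ℕ) (M : Matroid ℕ) : Prop :=
  M.E = Set.Icc 1 n ∧
  ∀ B, M.IsBase B ↔ ∃ i j, i < j ∧ a ≤ i ∧ b ≤ j ∧ 1 ≤ i ∧ j ≤ n ∧ B = ({i, j} : Set ℕ)

/-- `M` is the rank-3 Schubert matroid `S(a,b,c)` on `{1,…,n}`: its bases are exactly the
three-element subsets `{i,j,k}` of `{1,…,n}` with `i < j < k`, `a ≤ i`, `b ≤ j`, `c ≤ k`. -/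
def IsSchubert3 (n a b c : ℕ) (M : Matroid ℕ) : Prop :=
  M.E = Set.Icc 1 n ∧
  ∀ B, M.IsBase B ↔ ∃ i j k, i < j ∧ j < k ∧ a ≤ i ∧ b ≤ j ∧ c ≤ k ∧ 1 ≤ i ∧ k ≤ n ∧
    B = ({i, j, k} : Set ℕ)

end PaperPOAM

namespace PaperPOAM

/-- given `n ≥ 4` and a family `𝔽` of subsets of `{1,…,n}` with
`3 ≤ |F| ≤ n−2` for all `F ∈ 𝔽` and `|F ∩ F'| ≤ 1` for distinct members, there is a
rank-3 matroid on `{1,…,n}` whose cyclic flats are exactly `{∅, [n]} ∪ 𝔽`, each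
`F ∈ 𝔽` being a flat of rank 2. -/
theorem statement_12 (n : ℕ) (hn : 4 ≤ n) (𝔽 : Set (Set ℕ))
    (hsub : ∀ F ∈ 𝔽, F ⊆ Set.Icc 1 n)
    (hcard : ∀ F ∈ 𝔽, 3 ≤ F.ncard ∧ F.ncard ≤ n - 2)
    (hint : ∀ F ∈ 𝔽, ∀ F' ∈ 𝔽, F ≠ F' → (F ∩ F').ncard ≤ 1) :
    ∃ M : Matroid ℕ, M.E = Set.Icc 1 n ∧ RankEq M 3 ∧
      {F | IsCyclicFlat M F} = insert ∅ (insert (Set.Icc 1 n) 𝔽) ∧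
      ∀ F ∈ 𝔽, M.IsFlat F ∧ rkOf M F = 2 := by
  classical
  have hEfin : (Set.Icc 1 n : Set ℕ).Finite := Set.finite_Icc 1 n
  have hEcard : (Set.Icc 1 n : Set ℕ).ncard = n := by
    rw [← Finset.coe_Icc, Set.ncard_coe_finset, Nat.card_Icc]; omega
  have hfin : ∀ {S : Set ℕ}, S ⊆ Set.Icc 1 n → S.Finite := fun h => hEfin.subset h
  set Ind : Set ℕ → Prop :=
    fun I => I ⊆ Set.Icc 1 n ∧ I.ncard ≤ 3 ∧ ∀ F ∈ 𝔽, I ⊆ F → I.ncard ≤ 2 with hInd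
  -- two distinct members of 𝔽 cannot share a 2-element subset
  have pairU : ∀ {F F' : Set ℕ}, F ∈ 𝔽 → F' ∈ 𝔽 → ∀ {P : Set ℕ}, P ⊆ F → P ⊆ F' →
      2 ≤ P.ncard → F = F' := by
    intro F F' hF hF' P h1 h2 h3
    by_contra hne
    have hle := hint F hF F' hF' hne
    have h4 : P.ncard ≤ (F ∩ F').ncard :=
      Set.ncard_le_ncard (Set.subset_inter h1 h2) ((hfin (hsub F hF)).inter_of_left F')
    omega
  have ind_of_small : ∀ I : Set ℕ, I ⊆ Set.Icc 1 n → I.ncard ≤ 2 → Ind I :=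
    fun I h1 h2 => ⟨h1, h2.trans (by norm_num), fun F _ _ => h2⟩
  -- matroid axioms
  have hax1 : Ind ∅ := ind_of_small ∅ (Set.empty_subset _) (by simp)
  have hax2 : ∀ ⦃I J : Set ℕ⦄, Ind J → I ⊆ J → Ind I := by
    rintro I J ⟨hJE, hJ3, hJF⟩ hIJ
    have hJfin : J.Finite := hfin hJE
    refine ⟨hIJ.trans hJE, (Set.ncard_le_ncard hIJ hJfin).trans hJ3, ?_⟩
    intro F hF hIF
    by_contra hc
    push_neg at hc
    have hIJ' : I = J :=
      Set.eq_of_subset_of_ncard_le hIJ (hJ3.trans hc) hJfin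
    rw [hIJ'] at hc
    exact absurd (hJF F hF (hIJ' ▸ hIF)) (by omega)
  have hax3 : ∀ ⦃I J : Set ℕ⦄, Ind I → Ind J → I.ncard < J.ncard →
      ∃ e ∈ J, e ∉ I ∧ Ind (insert e I) := by
    intro I J hI hJ hlt
    have hIfin : I.Finite := hfin hI.1
    have hJfin : J.Finite := hfin hJ.1
    have hJI : (J \ I).Nonempty := by
      rw [Set.nonempty_iff_ne_empty]
      intro h
      rw [Set.diff_eq_empty] at h
      exact absurd (Set.ncard_le_ncard h hIfin) (by omega)
    rcases le_or_gt I.ncard 1 with h1 | h1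
    · obtain ⟨e, heJ, heI⟩ := hJI
      exact ⟨e, heJ, heI, ind_of_small _ (Set.insert_subset (hJ.1 heJ) hI.1)
        ((Set.ncard_insert_le e I).trans (by omega))⟩
    · have hI2 : I.ncard = 2 := by
        have := hI.2.1
        have := hJ.2.1
        omega
      by_cases hex : ∃ F ∈ 𝔽, I ⊆ F
      · obtain ⟨F, hF, hIF⟩ := hex
        have hJnF : ¬ J ⊆ F := by
          intro h
          have := hJ.2.2 F hF h
          omega
        obtain ⟨e, heJ, heF⟩ := Set.not_subset.mp hJnF
        have heI : e ∉ I := fun h => heF (hIF h)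
        refine ⟨e, heJ, heI, Set.insert_subset (hJ.1 heJ) hI.1, ?_, ?_⟩
        · rw [Set.ncard_insert_of_notMem heI hIfin]; omega
        · intro F' hF' hsub'
          have hIF' : I ⊆ F' := (Set.subset_insert e I).trans hsub'
          have : F' = F := pairU hF' hF hIF' hIF (by omega)
          exact absurd (this ▸ hsub' (Set.mem_insert e I)) heF
      · push_neg at hex
        obtain ⟨e, heJ, heI⟩ := hJI
        refine ⟨e, heJ, heI, Set.insert_subset (hJ.1 heJ) hI.1, ?_, ?_⟩
        · rw [Set.ncard_insert_of_notMem heI hIfin]; omega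
        · intro F' hF' hsub'
          exact absurd ((Set.subset_insert e I).trans hsub') (hex F' hF')
  have hax4 : ∀ ⦃I : Set ℕ⦄, Ind I → I ⊆ Set.Icc 1 n := fun I hI => hI.1
  set M : Matroid ℕ := (IndepMatroid.ofFinite hEfin Ind hax1 hax2 hax3 hax4).matroid with hM
  have hMInd : ∀ {I : Set ℕ}, M.Indep I ↔ Ind I := fun {I} => Iff.rfl
  have hME : M.E = Set.Icc 1 n := rfl
  -- closure computations
  have cl_small : ∀ I : Set ℕ, Ind I → I.ncard ≤ 1 → M.closure I = I := by
    intro I hI h1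
    have hI' : M.Indep I := hMInd.mpr hI
    refine subset_antisymm ?_ (M.subset_closure I hI.1)
    intro x hx
    rw [hI'.mem_closure_iff'] at hx
    exact hx.2 (hMInd.mpr (ind_of_small _ (Set.insert_subset hx.1 hI.1)
      ((Set.ncard_insert_le x I).trans (by omega))))
  have cl_pair_F : ∀ (I F : Set ℕ), Ind I → I.ncard = 2 → F ∈ 𝔽 → I ⊆ F →
      M.closure I = F := by
    intro I F hI h2 hF hIF
    have hI' : M.Indep I := hMInd.mpr hI
    have hIfin : I.Finite := hfin hI.1
    apply subset_antisymm
    · intro x hx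
      rw [hI'.mem_closure_iff'] at hx
      by_contra hxF
      have hxI : x ∉ I := fun h => hxF (hIF h)
      refine hxF (hIF (hx.2 (hMInd.mpr ?_)))
      refine ⟨Set.insert_subset hx.1 hI.1, ?_, ?_⟩
      · rw [Set.ncard_insert_of_notMem hxI hIfin]; omega
      · intro F' hF' hsub'
        have hFF : F' = F := pairU hF' hF ((Set.subset_insert x I).trans hsub') hIF (by omega)
        exact absurd (hFF ▸ hsub' (Set.mem_insert x I)) hxF
    · intro x hxF
      rw [hI'.mem_closure_iff']
      refine ⟨hsub F hF hxF, fun hind => ?_⟩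
      by_contra hxI
      have h3 : (insert x I).ncard = 3 := by
        rw [Set.ncard_insert_of_notMem hxI hIfin]; omega
      have := (hMInd.mp hind).2.2 F hF (Set.insert_subset hxF hIF)
      omega
  have cl_pair_noF : ∀ I : Set ℕ, Ind I → I.ncard = 2 → (∀ F ∈ 𝔽, ¬ I ⊆ F) →
      M.closure I = I := by
    intro I hI h2 hnoF
    have hI' : M.Indep I := hMInd.mpr hI
    have hIfin : I.Finite := hfin hI.1
    refine subset_antisymm ?_ (M.subset_closure I hI.1)
    intro x hx
    rw [hI'.mem_closure_iff'] at hx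
    by_cases hxI : x ∈ I
    · exact hxI
    apply hx.2
    refine hMInd.mpr ⟨Set.insert_subset hx.1 hI.1, ?_, ?_⟩
    · rw [Set.ncard_insert_of_notMem hxI hIfin]; omega
    · intro F' hF' hsub'
      exact absurd ((Set.subset_insert x I).trans hsub') (hnoF F' hF')
  -- bases
  have base3 : ∀ B : Set ℕ, Ind B → B.ncard = 3 → M.IsBase B := by
    intro B hB h3
    have hB' : M.Indep B := hMInd.mpr hB
    have hBfin : B.Finite := hfin hB.1
    apply hB'.isBase_of_ground_subset_closure
    intro x hx
    rw [hB'.mem_closure_iff']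
    refine ⟨hx, fun hind => ?_⟩
    by_contra hxB
    have h4 := (hMInd.mp hind).2.1
    rw [Set.ncard_insert_of_notMem hxB hBfin] at h4
    omega
  have base_iff3 : ∀ B : Set ℕ, M.IsBase B ↔ Ind B ∧ B.ncard = 3 := by
    intro B
    refine ⟨fun hB => ?_, fun h => base3 B h.1 h.2⟩
    have hBi : Ind B := hMInd.mp hB.indep
    refine ⟨hBi, ?_⟩
    by_contra hne
    have h2 : B.ncard ≤ 2 := by have := hBi.2.1; omega
    have hclE : M.closure B = M.E := hB.closure_eq
    rcases le_or_gt B.ncard 1 with h1 | h1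
    · have hEB : (Set.Icc 1 n : Set ℕ) = B := by
        rw [← hME, ← hclE, cl_small B hBi h1]
      have := hEcard
      rw [hEB] at this
      omega
    · have hB2 : B.ncard = 2 := by omega
      by_cases hex : ∃ F ∈ 𝔽, B ⊆ F
      · obtain ⟨F, hF, hBF⟩ := hex
        have hFE : F = Set.Icc 1 n := by
          rw [← cl_pair_F B F hBi hB2 hF hBF, hclE, hME]
        have h5 := hEcard
        rw [← hFE] at h5
        have := (hcard F hF).2
        omega
      · push_neg at hex
        have hEB : (Set.Icc 1 n : Set ℕ) = B := by
          rw [← hME, ← hclE, cl_pair_noF B hBi hB2 hex]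
        have := hEcard
        rw [hEB] at this
        omega
  -- circuits
  have circ3 : ∀ F ∈ 𝔽, ∀ C ⊆ F, C.ncard = 3 → IsCircuit M C := by
    intro F hF C hCF h3
    have hCfin : C.Finite := hfin (hCF.trans (hsub F hF))
    constructor
    · rw [Matroid.dep_iff]
      refine ⟨fun hind => ?_, hCF.trans (hsub F hF)⟩
      have := (hMInd.mp hind).2.2 F hF hCF
      omega
    · intro D hD hdep
      have hD2 : D.ncard < 3 := h3 ▸ Set.ncard_lt_ncard hD hCfin
      exact hdep.not_indep (hMInd.mpr (ind_of_small D
        (hD.subset.trans (hCF.trans (hsub F hF))) (by omega)))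
  have circ_card : ∀ C : Set ℕ, IsCircuit M C → 3 ≤ C.ncard := by
    intro C hC
    by_contra h
    push_neg at h
    exact hC.1.not_indep (hMInd.mpr (ind_of_small C hC.1.subset_ground (by omega)))
  have exists3sub : ∀ F ∈ 𝔽, ∀ e ∈ F, ∃ C, C ⊆ F ∧ e ∈ C ∧ C.ncard = 3 := by
    intro F hF e he
    have hFfin : F.Finite := hfin (hsub F hF)
    have h2 : 2 ≤ (F \ {e}).ncard := by
      rw [Set.ncard_diff_singleton_of_mem he]
      have := (hcard F hF).1
      omega
    obtain ⟨t, ht, htc⟩ := Set.exists_subset_card_eq h2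
    have het : e ∉ t := fun h => (ht h).2 rfl
    refine ⟨insert e t, Set.insert_subset he (ht.trans Set.diff_subset), Set.mem_insert e t, ?_⟩
    rw [Set.ncard_insert_of_notMem het (hFfin.subset (ht.trans Set.diff_subset)), htc]
  have dep_has_circuit : ∀ (m : ℕ) (D : Set ℕ), D.ncard ≤ m → M.Dep D →
      ∃ C, C ⊆ D ∧ IsCircuit M C := by
    intro m
    induction m with
    | zero =>
      intro D h hdep
      have hDfin : D.Finite := hfin hdep.subset_ground
      have hD0 : D = ∅ := by rw [← Set.ncard_eq_zero hDfin]; omega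
      exact absurd (hMInd.mpr hax1) (hD0 ▸ hdep).not_indep
    | succ m ih =>
      intro D h hdep
      by_cases hmin : ∀ D', D' ⊂ D → ¬ M.Dep D'
      · exact ⟨D, subset_rfl, hdep, hmin⟩
      · push_neg at hmin
        obtain ⟨D', hss, hdep'⟩ := hmin
        have hlt : D'.ncard < D.ncard := Set.ncard_lt_ncard hss (hfin hdep.subset_ground)
        obtain ⟨C, hCD, hC⟩ := ih D' (by omega) hdep'
        exact ⟨C, hCD.trans hss.subset, hC⟩
  have exists_ind3_avoid : ∀ e : ℕ, ∃ B : Set ℕ,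
      Ind B ∧ B ⊆ Set.Icc 1 n \ {e} ∧ B.ncard = 3 := by
    intro e
    have hdfin : (Set.Icc 1 n \ {e} : Set ℕ).Finite := hEfin.diff
    have hdcard : n - 1 ≤ (Set.Icc 1 n \ {e}).ncard := by
      have h1 : (Set.Icc 1 n : Set ℕ) ⊆ (Set.Icc 1 n \ {e}) ∪ {e} := by
        intro x hx
        by_cases hxe : x = e
        · exact Or.inr (by simp [hxe])
        · exact Or.inl ⟨hx, by simp [hxe]⟩
      have h2 := Set.ncard_le_ncard h1 (hdfin.union (Set.finite_singleton e))
      have h3 := Set.ncard_union_le (Set.Icc 1 n \ {e}) ({e} : Set ℕ)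
      rw [hEcard] at h2
      have h4 : ({e} : Set ℕ).ncard = 1 := Set.ncard_singleton e
      omega
    obtain ⟨P, hP, hPc⟩ := Set.exists_subset_card_eq
      (show 2 ≤ (Set.Icc 1 n \ {e}).ncard by omega)
    have hPE : P ⊆ Set.Icc 1 n := hP.trans Set.diff_subset
    by_cases hex : ∃ F ∈ 𝔽, P ⊆ F
    · obtain ⟨F, hF, hPF⟩ := hex
      have hns : ¬ (Set.Icc 1 n \ {e} : Set ℕ) ⊆ F := by
        intro hc
        have := Set.ncard_le_ncard hc (hfin (hsub F hF))
        have := (hcard F hF).2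
        omega
      obtain ⟨x, hxd, hxF⟩ := Set.not_subset.mp hns
      have hxP : x ∉ P := fun h => hxF (hPF h)
      refine ⟨insert x P, ⟨Set.insert_subset hxd.1 hPE, ?_, ?_⟩,
        Set.insert_subset hxd hP, ?_⟩
      · rw [Set.ncard_insert_of_notMem hxP (hdfin.subset hP)]; omega
      · intro F' hF' hsub'
        have hFF : F' = F := pairU hF' hF ((Set.subset_insert x P).trans hsub') hPF (by omega)
        exact absurd (hFF ▸ hsub' (Set.mem_insert x P)) hxF
      · rw [Set.ncard_insert_of_notMem hxP (hdfin.subset hP)]; omega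
    · push_neg at hex
      have hns : ¬ (Set.Icc 1 n \ {e} : Set ℕ) ⊆ P := by
        intro hc
        have := Set.ncard_le_ncard hc (hdfin.subset hP)
        omega
      obtain ⟨x, hxd, hxP⟩ := Set.not_subset.mp hns
      refine ⟨insert x P, ⟨Set.insert_subset hxd.1 hPE, ?_, ?_⟩,
        Set.insert_subset hxd hP, ?_⟩
      · rw [Set.ncard_insert_of_notMem hxP (hdfin.subset hP)]; omega
      · intro F' hF' hsub'
        exact absurd ((Set.subset_insert x P).trans hsub') (hex F' hF')
      · rw [Set.ncard_insert_of_notMem hxP (hdfin.subset hP)]; omega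
  -- flats
  have flat_of_closure : ∀ F : Set ℕ, F ⊆ M.E → M.closure F ⊆ F → M.IsFlat F := by
    intro F hFE hcl
    exact Matroid.isFlat_iff_closure_eq.mpr (subset_antisymm hcl (M.subset_closure F hFE))
  have flatF : ∀ F ∈ 𝔽, M.IsFlat F := by
    intro F hF
    obtain ⟨P, hPF, hPc⟩ := Set.exists_subset_card_eq
      (show 2 ≤ F.ncard from le_trans (by norm_num) (hcard F hF).1)
    have hPind : Ind P := ind_of_small P (hPF.trans (hsub F hF)) (le_of_eq hPc)
    have h1 : M.closure P = F := cl_pair_F P F hPind hPc hF hPF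
    have h2 : M.closure F = F := by rw [← h1, M.closure_closure]
    exact flat_of_closure F (hsub F hF) h2.subset
  -- cyclic flats
  have cyc_empty : IsCyclicFlat M ∅ :=
    ⟨flat_of_closure ∅ (Set.empty_subset _) (cl_small ∅ hax1 (by simp)).subset,
      fun e he => absurd he (Set.notMem_empty e)⟩
  have cyc_F : ∀ F ∈ 𝔽, IsCyclicFlat M F := by
    intro F hF
    refine ⟨flatF F hF, fun e he => ?_⟩
    obtain ⟨C, hCF, heC, h3⟩ := exists3sub F hF e he
    exact ⟨C, circ3 F hF C hCF h3, hCF, heC⟩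
  have cyc_E : IsCyclicFlat M (Set.Icc 1 n) := by
    refine ⟨hME ▸ M.ground_isFlat, fun e he => ?_⟩
    obtain ⟨B, hB, hBs, h3⟩ := exists_ind3_avoid e
    have heB : e ∉ B := fun h => (hBs h).2 rfl
    have hdep : M.Dep (insert e B) := by
      rw [Matroid.dep_iff]
      refine ⟨fun hind => ?_, Set.insert_subset he hB.1⟩
      have h4 := (hMInd.mp hind).2.1
      rw [Set.ncard_insert_of_notMem heB (hfin hB.1)] at h4
      omega
    obtain ⟨C, hCD, hC⟩ := dep_has_circuit (insert e B).ncard (insert e B) le_rfl hdep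
    have heC : e ∈ C := by
      by_contra hec
      have hCB : C ⊆ B := fun x hx =>
        (Set.mem_insert_iff.mp (hCD hx)).resolve_left (fun h => hec (h ▸ hx))
      exact hC.1.not_indep (hMInd.mpr (hax2 hB hCB))
    exact ⟨C, hC, hCD.trans (Set.insert_subset he (hBs.trans Set.diff_subset)), heC⟩
  have cyc_only : ∀ X : Set ℕ, IsCyclicFlat M X → X = ∅ ∨ X = Set.Icc 1 n ∨ X ∈ 𝔽 := by
    intro X hX
    obtain ⟨hflat, hcyc⟩ := hX
    rcases Set.eq_empty_or_nonempty X with rfl | ⟨e, he⟩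
    · exact Or.inl rfl
    obtain ⟨C, hC, hCX, heC⟩ := hcyc e he
    have hXE : X ⊆ M.E := hflat.subset_ground
    have hXfin : X.Finite := hfin hXE
    have hX3 : 3 ≤ X.ncard := le_trans (circ_card C hC) (Set.ncard_le_ncard hCX hXfin)
    obtain ⟨I, hI⟩ := M.exists_isBasis X hXE
    have hIind : Ind I := hMInd.mp hI.indep
    have hXcl : X ⊆ M.closure I := hI.subset_closure
    have hclX : M.closure X = X := hflat.closure
    rcases le_or_gt I.ncard 1 with h1 | h1
    · rw [cl_small I hIind h1] at hXcl
      have := Set.ncard_le_ncard hXcl (hfin hIind.1)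
      omega
    rcases Nat.lt_or_ge I.ncard 3 with h2 | h3
    · have hI2 : I.ncard = 2 := by omega
      by_cases hex : ∃ F ∈ 𝔽, I ⊆ F
      · obtain ⟨F, hF, hIF⟩ := hex
        have hclI : M.closure I = F := cl_pair_F I F hIind hI2 hF hIF
        rw [hclI] at hXcl
        have hFX : F ⊆ X := by
          rw [← hclI, ← hclX]
          exact M.closure_subset_closure hI.subset
        have hXF : X = F := Set.Subset.antisymm hXcl hFX
        refine Or.inr (Or.inr ?_)
        rw [hXF]
        exact hF
      · push_neg at hex
        rw [cl_pair_noF I hIind hI2 hex] at hXcl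
        have := Set.ncard_le_ncard hXcl (hfin hIind.1)
        omega
    · have hI3 : I.ncard = 3 := le_antisymm hIind.2.1 h3
      have hbase : M.IsBase I := base3 I hIind hI3
      have hEX : M.E ⊆ X := by
        rw [← hbase.closure_eq, ← hclX]
        exact M.closure_subset_closure hI.subset
      exact Or.inr (Or.inl (Set.Subset.antisymm hXE (hME ▸ hEX)))
  have rk2 : ∀ F ∈ 𝔽, rkOf M F = 2 := by
    intro F hF
    have hset : {m | ∃ I, M.Indep I ∧ I ⊆ F ∧ I.ncard = m} = Set.Iic 2 := by
      ext m
      simp only [Set.mem_setOf_eq, Set.mem_Iic]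
      constructor
      · rintro ⟨I, hI, hIF, rfl⟩
        exact (hMInd.mp hI).2.2 F hF hIF
      · intro hm
        obtain ⟨I, hIF, hIc⟩ := Set.exists_subset_card_eq
          (show m ≤ F.ncard from hm.trans (le_trans (by norm_num) (hcard F hF).1))
        exact ⟨I, hMInd.mpr (ind_of_small I (hIF.trans (hsub F hF)) (hIc.le.trans hm)), hIF, hIc⟩
    rw [rkOf, hset, csSup_Iic]
  refine ⟨M, hME, fun B hB => ((base_iff3 B).mp hB).2, ?_, fun F hF => ⟨flatF F hF, rk2 F hF⟩⟩
  ext X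
  simp only [Set.mem_setOf_eq, Set.mem_insert_iff]
  constructor
  · intro h
    exact cyc_only X h
  · rintro (rfl | rfl | hF)
    · exact cyc_empty
    · exact cyc_E
    · exact cyc_F X hF



end PaperPOAM
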